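/- Let F1,...,Fk be finite subsets of Z^d. If F1,...,Fk admit a joint co-tile A ⊆ Z^d (F_i ⊕ A = Z^d for all i) such that A is a finite disjoint union of (d−1)-periodic sets, then F1,...,Fk admit a joint co-tile A' that is d-periodic (its stabilizer has finite index in Z^d). -/

import Mathlib

/-- `F ⊕ A = G`: every element of `G` has a unique representation `f + a`,
`f ∈ F`, `a ∈ A`. -/
def Tiles {G : Type*} [AddCommGroup G] (F : Finset G) (A : Set G) : Prop :=
  ∀ z : G, ∃! p : G × G, p.1 ∈ F ∧ p.2 ∈ A ∧ p.1 + p.2 = z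

/-- Independent tuple of elements of an abelian group. -/
def IndepT {G : Type*} [AddCommGroup G] {k : ℕ} (g : Fin k → G) : Prop :=
  ∀ n : Fin k → ℤ, (∑ i, n i • g i) = 0 → ∀ i, n i = 0

/-- The stabilizer of a subset `A` of an abelian group, as a subgroup. -/
def stabSetG {G : Type*} [AddCommGroup G] (A : Set G) : AddSubgroup G where
  carrier := { v : G | ∀ x : G, x + v ∈ A ↔ x ∈ A }
  zero_mem' := by intro x; simp
  add_mem' := by
    intro a b ha hb x
    rw [← add_assoc]
    exact (hb _).trans (ha _)
  neg_mem' := by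
    intro a ha x
    simpa using (ha (x + -a)).symm

open Classical in
/-- counting function -/
noncomputable def cnt {G : Type*} [AddCommGroup G] (F : Finset G) (S : Set G) (z : G) : ℤ :=
  ∑ f ∈ F, if z - f ∈ S then 1 else 0

section cntlemmas
variable {G : Type*} [AddCommGroup G]

open Classical

lemma sum_ind_eq_one_iff (F : Finset G) (P : G → Prop) :
    (∑ f ∈ F, if P f then (1:ℤ) else 0) = 1 ↔ ∃! f, f ∈ F ∧ P f := by
  constructor
  · intro h
    by_cases hex : ∃ f ∈ F, P f
    · obtain ⟨f₀, hf₀, hPf₀⟩ := hex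
      refine ⟨f₀, ⟨hf₀, hPf₀⟩, ?_⟩
      intro g ⟨hg, hPg⟩
      by_contra hne
      have h2 : (2:ℤ) ≤ ∑ f ∈ F, if P f then (1:ℤ) else 0 := by
        have hsub : {g, f₀} ⊆ F := by
          intro x hx
          simp only [Finset.mem_insert, Finset.mem_singleton] at hx
          rcases hx with rfl | rfl <;> assumption
        have hstep : ∑ f ∈ ({g, f₀} : Finset G), (if P f then (1:ℤ) else 0)
            ≤ ∑ f ∈ F, (if P f then (1:ℤ) else 0) :=
          Finset.sum_le_sum_of_subset_of_nonneg hsub (fun i _ _ => by positivity)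
        calc (2:ℤ) = ∑ f ∈ ({g, f₀} : Finset G), if P f then (1:ℤ) else 0 := by
              rw [Finset.sum_pair hne, if_pos hPg, if_pos hPf₀]; norm_num
          _ ≤ _ := hstep
      omega
    · push_neg at hex
      have : (∑ f ∈ F, if P f then (1:ℤ) else 0) = 0 := by
        apply Finset.sum_eq_zero
        intro f hf
        rw [if_neg (hex f hf)]
      omega
  · rintro ⟨f₀, ⟨hf₀, hPf₀⟩, huniq⟩
    rw [Finset.sum_eq_single_of_mem f₀ hf₀]
    · rw [if_pos hPf₀]
    · intro b hb hbne
      rw [if_neg]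
      intro hPb
      exact hbne (huniq b ⟨hb, hPb⟩)

lemma tiles_iff_cnt (F : Finset G) (A : Set G) :
    Tiles F A ↔ ∀ z, cnt F A z = 1 := by
  have key : ∀ z : G, (∃! p : G × G, p.1 ∈ F ∧ p.2 ∈ A ∧ p.1 + p.2 = z) ↔
      (∃! f, f ∈ F ∧ z - f ∈ A) := by
    intro z
    constructor
    · rintro ⟨p, ⟨h1, h2, h3⟩, hu⟩
      refine ⟨p.1, ⟨h1, by rw [← h3]; simpa using h2⟩, ?_⟩
      intro f ⟨hf, hfA⟩
      have := hu (f, z - f) ⟨hf, hfA, by simp⟩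
      rw [← this]
    · rintro ⟨f, ⟨hf, hfA⟩, hu⟩
      refine ⟨(f, z - f), ⟨hf, hfA, by simp⟩, ?_⟩
      rintro ⟨f', a'⟩ ⟨h1, h2, h3⟩
      have ha' : a' = z - f' := by
        simp only at h3; rw [← h3]; abel
      have : f' = f := hu f' ⟨h1, by rw [← ha']; exact h2⟩
      simp [this, ha']
    
  unfold Tiles cnt
  constructor
  · intro h z
    rw [sum_ind_eq_one_iff]
    exact (key z).mp (h z)
  · intro h z
    exact (key z).mpr ((sum_ind_eq_one_iff F _).mp (by
      have := h z
      convert this using 2))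

lemma cnt_nonneg (F : Finset G) (S : Set G) (z : G) : 0 ≤ cnt F S z := by
  unfold cnt; positivity

lemma cnt_le_card (F : Finset G) (S : Set G) (z : G) : cnt F S z ≤ F.card := by
  unfold cnt
  calc ∑ f ∈ F, (if z - f ∈ S then (1:ℤ) else 0) ≤ ∑ f ∈ F, 1 := by
        apply Finset.sum_le_sum; intro i _; split <;> omega
    _ = F.card := by simp

lemma cnt_pos_of_mem {F : Finset G} {S : Set G} {z f : G} (hf : f ∈ F) (h : z - f ∈ S) :
    1 ≤ cnt F S z := by
  unfold cnt
  have := Finset.single_le_sum (f := fun f => if z - f ∈ S then (1:ℤ) else 0)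
    (fun i _ => by positivity) hf
  rwa [if_pos h] at this

lemma cnt_shift {S : Set G} {w : G} (hw : ∀ x : G, x + w ∈ S ↔ x ∈ S)
    (F : Finset G) (z : G) : cnt F S (z + w) = cnt F S z := by
  unfold cnt
  apply Finset.sum_congr rfl
  intro f _
  have : z + w - f = (z - f) + w := by abel
  rw [this]
  simp [hw (z - f)]

end cntlemmas

section two
variable {G : Type*} [AddCommGroup G]
open Classical

lemma mem_stab {S : Set G} {v : G} : v ∈ stabSetG S ↔ ∀ x : G, x + v ∈ S ↔ x ∈ S := Iff.rfl

lemma cnt_iUnion {r : ℕ} (C : Fin r → Set G)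
    (hdisj : ∀ i j, i ≠ j → Disjoint (C i) (C j)) (F : Finset G) (z : G) :
    cnt F (⋃ i, C i) z = ∑ i, cnt F (C i) z := by
  unfold cnt
  rw [Finset.sum_comm]
  apply Finset.sum_congr rfl
  intro f _
  by_cases h : z - f ∈ ⋃ i, C i
  · rw [if_pos h]
    obtain ⟨i₀, hi₀⟩ := Set.mem_iUnion.mp h
    rw [Finset.sum_eq_single_of_mem i₀ (Finset.mem_univ _)]
    · rw [if_pos hi₀]
    · intro j _ hj
      rw [if_neg]
      intro hmem
      exact (hdisj j i₀ hj).le_bot ⟨hmem, hi₀⟩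
  · rw [if_neg h]
    symm
    apply Finset.sum_eq_zero
    intro i _
    rw [if_neg (fun hm => h (Set.mem_iUnion.mpr ⟨i, hm⟩))]

lemma stab_iUnion {ι : Sort*} (C : ι → Set G) {v : G}
    (h : ∀ i, v ∈ stabSetG (C i)) : v ∈ stabSetG (⋃ i, C i) := by
  intro x
  simp only [Set.mem_iUnion]
  exact ⟨fun ⟨i, hi⟩ => ⟨i, (h i x).mp hi⟩, fun ⟨i, hi⟩ => ⟨i, (h i x).mpr hi⟩⟩

lemma stab_span {d : ℕ} {S : Set (Fin d → ℤ)} {m : ℕ} {u : Fin m → (Fin d → ℤ)}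
    (hu : ∀ l, u l ∈ stabSetG S) {x : Fin d → ℤ}
    (hx : x ∈ Submodule.span ℤ (Set.range u)) : x ∈ stabSetG S := by
  induction hx using Submodule.span_induction with
  | mem y hy => obtain ⟨l, rfl⟩ := hy; exact hu l
  | zero => exact zero_mem _
  | add a b _ _ ha hb => exact add_mem ha hb
  | smul c a _ ha => exact AddSubgroup.zsmul_mem _ ha c

lemma stab_empty (v : G) : v ∈ stabSetG (∅ : Set G) := by
  intro x; simp

lemma cnt_empty (F : Finset G) (z : G) : cnt F (∅ : Set G) z = 0 := by
  unfold cnt; simp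

lemma cnt_shift_zsmul {S : Set G} {w : G} (hw : w ∈ stabSetG S)
    (F : Finset G) (c : ℤ) (z : G) : cnt F S (z + c • w) = cnt F S z := by
  have h := AddSubgroup.zsmul_mem _ hw c
  unfold cnt
  apply Finset.sum_congr rfl
  intro f _
  have : z + c • w - f = (z - f) + c • w := by abel
  rw [this]
  simp [h (z - f)]

end two


open Module

variable {d : ℕ}

def castQ (z : Fin d → ℤ) : Fin d → ℚ := fun j => (z j : ℚ)

lemma castQ_inj : Function.Injective (castQ (d := d)) := by
  intro x y h
  funext j
  have h2 : ((x j : ℚ)) = ((y j : ℚ)) := congrFun h j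
  exact_mod_cast h2

lemma castQ_add (x y : Fin d → ℤ) : castQ (x + y) = castQ x + castQ y := by
  funext j; simp [castQ]

lemma castQ_zsmul (c : ℤ) (x : Fin d → ℤ) : castQ (c • x) = (c : ℚ) • castQ x := by
  funext j; simp [castQ]

lemma castQ_sum {ι : Type*} (s : Finset ι) (f : ι → (Fin d → ℤ)) :
    castQ (∑ i ∈ s, f i) = ∑ i ∈ s, castQ (f i) := by
  funext j
  simp [castQ, Finset.sum_apply]

lemma den_clear (m : ℤ) (q : ℚ) (h : (q.den : ℤ) ∣ m) : ∃ n : ℤ, (n : ℚ) = m * q := by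
  obtain ⟨t, ht⟩ := h
  refine ⟨t * q.num, ?_⟩
  set a := q.num with ha
  set b := q.den with hb
  have hden : ((b : ℚ)) ≠ 0 := by
    have := q.den_nz
    simp only [hb]
    exact_mod_cast this
  have hq' : ((a : ℚ)) / ((b : ℚ)) = q := Rat.num_div_den q
  rw [← hq', ht]
  push_cast
  field_simp

lemma dens_dvd_prod {ι : Type*} [Fintype ι] (c : ι → ℚ) (l : ι) :
    ((c l).den : ℤ) ∣ ∏ i, ((c i).den : ℤ) :=
  Finset.dvd_prod_of_mem _ (Finset.mem_univ l)

lemma dens_prod_pos {ι : Type*} [Fintype ι] (c : ι → ℚ) :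
    0 < ∏ i, ((c i).den : ℤ) := by
  apply Finset.prod_pos
  intro i _
  exact_mod_cast (c i).pos

lemma indepQ {m : ℕ} {g : Fin m → (Fin d → ℤ)} (h : IndepT g) :
    LinearIndependent ℚ (fun l => castQ (g l)) := by
  rw [Fintype.linearIndependent_iff]
  intro q hq
  set D : ℤ := ∏ l, ((q l).den : ℤ) with hD
  have hDpos := dens_prod_pos q
  have hn : ∀ l, ∃ n : ℤ, (n : ℚ) = (D : ℚ) * q l := by
    intro l
    obtain ⟨n, hn⟩ := den_clear D (q l) (dens_dvd_prod q l)
    exact ⟨n, by exact_mod_cast hn⟩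
  choose n hnq using hn
  have hzero : (∑ l, n l • g l) = 0 := by
    apply castQ_inj
    rw [castQ_sum]
    have : ∀ l, castQ (n l • g l) = ((D : ℚ) * q l) • castQ (g l) := by
      intro l; rw [castQ_zsmul, hnq]
    rw [Finset.sum_congr rfl (fun l _ => this l)]
    have : ∑ l, ((D:ℚ) * q l) • castQ (g l) = (D:ℚ) • ∑ l, q l • castQ (g l) := by
      rw [Finset.smul_sum]
      apply Finset.sum_congr rfl
      intro l _
      rw [smul_smul]
    rw [this, hq, smul_zero]
    funext j; simp [castQ]
  intro l
  have hnl := h n hzero l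
  have : (D : ℚ) * q l = 0 := by rw [← hnq l, hnl]; norm_num
  rcases mul_eq_zero.mp this with h' | h'
  · exfalso
    exact (Int.cast_ne_zero (α := ℚ)).mpr hDpos.ne' h'
  · exact h'

lemma rat_span_int {m : ℕ} {u : Fin m → (Fin d → ℤ)} {z : Fin d → ℤ}
    (hz : castQ z ∈ Submodule.span ℚ (Set.range (fun l => castQ (u l)))) :
    ∃ M : ℤ, 0 < M ∧ M • z ∈ Submodule.span ℤ (Set.range u) := by
  obtain ⟨c, hc⟩ := (Submodule.mem_span_range_iff_exists_fun ℚ).mp hz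
  set M : ℤ := ∏ l, ((c l).den : ℤ) with hM
  have hMpos := dens_prod_pos c
  have hn : ∀ l, ∃ n : ℤ, (n : ℚ) = (M : ℚ) * c l := by
    intro l
    obtain ⟨n, hn⟩ := den_clear M (c l) (dens_dvd_prod c l)
    exact ⟨n, by exact_mod_cast hn⟩
  choose n hnq using hn
  refine ⟨M, hMpos, ?_⟩
  have heq : M • z = ∑ l, n l • u l := by
    apply castQ_inj
    rw [castQ_zsmul, castQ_sum]
    have : ∀ l, castQ (n l • u l) = ((M : ℚ) * c l) • castQ (u l) := by
      intro l; rw [castQ_zsmul, hnq]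
    rw [Finset.sum_congr rfl (fun l _ => this l), ← hc, Finset.smul_sum]
    apply Finset.sum_congr rfl
    intro l _
    rw [smul_smul]
  rw [heq]
  exact Submodule.sum_mem _ (fun l _ => Submodule.smul_mem _ _ (Submodule.subset_span ⟨l, rfl⟩))

/-- construction of an integer normal functional for an independent (d-1)-tuple -/
lemma exists_ell {m : ℕ} (hmd : m + 1 = d) (u : Fin m → (Fin d → ℤ))
    (hind : LinearIndependent ℚ (fun l => castQ (u l))) :
    ∃ (ℓ : (Fin d → ℤ) →ₗ[ℤ] ℤ) (W₀ : Fin d → ℤ),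
      (∀ l, ℓ (u l) = 0) ∧ ℓ W₀ ≠ 0 ∧
      (∀ z, ℓ z = 0 → castQ z ∈ Submodule.span ℚ (Set.range (fun l => castQ (u l)))) := by
  classical
  set S : Submodule ℚ (Fin d → ℚ) := Submodule.span ℚ (Set.range (fun l => castQ (u l))) with hS
  have hfrS : finrank ℚ S = m := by
    rw [hS, finrank_span_eq_card hind, Fintype.card_fin]
  have hfrV : finrank ℚ (Fin d → ℚ) = d := by
    rw [finrank_pi, Fintype.card_fin]
  have hfrQuot : finrank ℚ ((Fin d → ℚ) ⧸ S) = 1 := by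
    have := Submodule.finrank_quotient_add_finrank S
    omega
  -- basis of the quotient
  have hne : Nonempty (Fin (finrank ℚ ((Fin d → ℚ) ⧸ S))) := by
    rw [hfrQuot]; exact ⟨0⟩
  obtain ⟨i₀⟩ := hne
  set b := Module.finBasis ℚ ((Fin d → ℚ) ⧸ S) with hb
  set lam : (Fin d → ℚ) →ₗ[ℚ] ℚ := (b.coord i₀).comp S.mkQ with hlam
  have hlamS : ∀ v ∈ S, lam v = 0 := by
    intro v hv
    simp only [hlam, LinearMap.comp_apply]
    rw [Submodule.mkQ_apply, (Submodule.Quotient.mk_eq_zero S).mpr hv]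
    simp
  obtain ⟨v₀, hv₀⟩ := S.mkQ_surjective (b i₀)
  have hlamv₀ : lam v₀ = 1 := by
    simp only [hlam, LinearMap.comp_apply, hv₀]
    simp [Basis.coord_apply, Basis.repr_self]
  -- kernel of lam is S
  have hker : LinearMap.ker lam = S := by
    have hle : S ≤ LinearMap.ker lam := fun v hv => LinearMap.mem_ker.mpr (hlamS v hv)
    have hrange : LinearMap.range lam = ⊤ := by
      rw [LinearMap.range_eq_top]
      intro q
      exact ⟨q • v₀, by rw [map_smul, hlamv₀, smul_eq_mul, mul_one]⟩
    have h1 : finrank ℚ (LinearMap.range lam) = 1 := by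
      rw [hrange]; rw [finrank_top]; exact finrank_self ℚ
    have := LinearMap.finrank_range_add_finrank_ker lam
    have hkerrank : finrank ℚ (LinearMap.ker lam) = m := by omega
    exact (Submodule.eq_of_le_of_finrank_le hle (by omega)).symm
  -- integrality
  set q : Fin d → ℚ := fun j => lam (fun j' => if j = j' then 1 else 0) with hqdef
  set c : ℤ := ∏ j, ((q j).den : ℤ) with hc
  have hcpos := dens_prod_pos q
  have hn : ∀ j, ∃ n : ℤ, (n : ℚ) = (c : ℚ) * q j := by
    intro j
    obtain ⟨n, hn⟩ := den_clear c (q j) (dens_dvd_prod q j)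
    exact ⟨n, by exact_mod_cast hn⟩
  choose nn hnn using hn
  set ℓ : (Fin d → ℤ) →ₗ[ℤ] ℤ :=
    { toFun := fun z => ∑ j, z j * nn j
      map_add' := by intro x y; simp [add_mul, Finset.sum_add_distrib]
      map_smul' := by
        intro cz x
        simp only [Pi.smul_apply, smul_eq_mul, RingHom.id_apply]
        rw [Finset.mul_sum]
        apply Finset.sum_congr rfl
        intro j _
        ring } with hℓ
  have hcast : ∀ z : Fin d → ℤ, ((ℓ z : ℚ)) = (c : ℚ) * lam (castQ z) := by
    intro z
    have hlz : ℓ z = ∑ j, z j * nn j := rfl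
    have hz : castQ z = ∑ i, castQ z i • (fun j => if i = j then (1:ℚ) else 0) :=
      pi_eq_sum_univ (castQ z)
    rw [hlz, hz, map_sum]
    simp only [map_smul, smul_eq_mul]
    push_cast
    rw [Finset.mul_sum]
    apply Finset.sum_congr rfl
    intro j _
    have h1 : castQ z j = ((z j : ℚ)) := rfl
    rw [h1, hnn j]
    ring
  have hcne : ((c : ℚ)) ≠ 0 := (Int.cast_ne_zero (α := ℚ)).mpr hcpos.ne'
  -- W₀ construction
  have hWex : ∀ j : Fin d, ∃ w : ℤ, ((w : ℚ)) = ((∏ j', ((v₀ j').den : ℤ) : ℤ) : ℚ) * v₀ j := by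
    intro j
    obtain ⟨w, hw⟩ := den_clear (∏ j', ((v₀ j').den : ℤ)) (v₀ j) (dens_dvd_prod v₀ j)
    exact ⟨w, by exact_mod_cast hw⟩
  choose W₀ hW₀ using hWex
  have hMvpos := dens_prod_pos v₀
  have hcastW₀ : castQ W₀ = ((∏ j', ((v₀ j').den : ℤ) : ℤ) : ℚ) • v₀ := by
    funext j
    simp only [castQ, Pi.smul_apply, smul_eq_mul]
    exact hW₀ j
  refine ⟨ℓ, W₀, ?_, ?_, ?_⟩
  · intro l
    have hmem : castQ (u l) ∈ S := Submodule.subset_span ⟨l, rfl⟩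
    have : ((ℓ (u l) : ℚ)) = 0 := by rw [hcast, hlamS _ hmem, mul_zero]
    exact_mod_cast this
  · intro h0
    have : ((ℓ W₀ : ℚ)) = 0 := by rw [h0]; norm_num
    rw [hcast, hcastW₀, map_smul, hlamv₀, smul_eq_mul, mul_one] at this
    rcases mul_eq_zero.mp this with h' | h'
    · exact hcne h'
    · exact (Int.cast_ne_zero (α := ℚ)).mpr hMvpos.ne' h'
  · intro z hz0
    have : ((ℓ z : ℚ)) = 0 := by rw [hz0]; norm_num
    rw [hcast] at this
    rcases mul_eq_zero.mp this with h' | h'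
    · exact absurd h' hcne
    · have hmem : castQ z ∈ LinearMap.ker lam := LinearMap.mem_ker.mpr h'
      rw [hker] at hmem
      exact hmem


variable {G : Type*} [AddCommGroup G]

/-- difference operator along W -/
def dW (W : G) (f : G → ℤ) : G → ℤ := fun z => f (z + W) - f z

def dI (g : ℤ → ℤ) : ℤ → ℤ := fun n => g (n + 1) - g n

lemma delta_iter {ι : Type*} [DecidableEq ι] (W₁ : G) (Wv : ι → G) (N : AddSubgroup G)
    (hW₁N : ∀ i', Wv i' - W₁ ∈ N) :
    ∀ (T : Finset ι) (f : G → ℤ) (ψ : ι → G → ℤ) (c₀ : ℤ),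
      (∀ v ∈ N, ∀ z, f (z + v) = f z) →
      (∀ i' ∈ T, ∀ z, ψ i' (z + Wv i') = ψ i' z) →
      (∀ z, f z = c₀ - ∑ i' ∈ T, ψ i' z) →
      ∃ c, ∀ z, (dW W₁)^[T.card] f z = c := by
  intro T
  induction T using Finset.induction_on with
  | empty =>
    intro f ψ c₀ _ _ hf
    exact ⟨c₀, by simpa using hf⟩
  | @insert j s hj ih =>
    intro f ψ c₀ hnice hψ hf
    have hcard : (insert j s).card = s.card + 1 := Finset.card_insert_of_notMem hj
    rw [hcard, Function.iterate_succ_apply]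
    set f' := dW W₁ f with hf'
    have hnice' : ∀ v ∈ N, ∀ z, f' (z + v) = f' z := by
      intro v hv z
      simp only [hf', dW]
      rw [show z + v + W₁ = (z + W₁) + v by abel, hnice v hv (z + W₁), hnice v hv z]
    set ψ' : ι → G → ℤ := fun i' => dW (Wv j) (ψ i') with hψ'
    have hψinv' : ∀ i' ∈ s, ∀ z, ψ' i' (z + Wv i') = ψ' i' z := by
      intro i' hi' z
      simp only [hψ', dW]
      rw [show z + Wv i' + Wv j = (z + Wv j) + Wv i' by abel,
        hψ i' (Finset.mem_insert_of_mem hi') (z + Wv j), hψ i' (Finset.mem_insert_of_mem hi') z]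
    have hfeq' : ∀ z, f' z = 0 - ∑ i' ∈ s, ψ' i' z := by
      intro z
      have h1 : f (z + W₁) = f (z + Wv j) := by
        have := hnice (Wv j - W₁) (hW₁N j) (z + W₁)
        rw [show z + W₁ + (Wv j - W₁) = z + Wv j by abel] at this
        exact this.symm
      simp only [hf', dW, h1, hf (z + Wv j), hf z]
      rw [Finset.sum_insert hj, Finset.sum_insert hj,
        hψ j (Finset.mem_insert_self j s) z]
      simp only [hψ', dW]
      rw [Finset.sum_sub_distrib]
      ring
    exact ih f' ψ' 0 hnice' hψinv' hfeq'

lemma dI_iter_eq (W : G) : ∀ (t : ℕ) (f : G → ℤ) (z : G) (n : ℤ),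
    dI^[t] (fun n => f (z + n • W)) n = (dW W)^[t] f (z + n • W) := by
  intro t
  induction t with
  | zero => intro f z n; simp
  | succ t ih =>
    intro f z n
    rw [Function.iterate_succ_apply, Function.iterate_succ_apply]
    have hg : dI (fun n => f (z + n • W)) = fun n => (dW W f) (z + n • W) := by
      funext m
      simp only [dI, dW]
      rw [show z + (m + 1) • W = z + m • W + W by rw [add_zsmul, one_zsmul]; abel]
    rw [hg]
    exact ih (dW W f) z n

lemma oneD : ∀ (t : ℕ) (g : ℤ → ℤ) (Cb : ℤ), (∀ n, |g n| ≤ Cb) →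
    (∃ c, ∀ n, dI^[t] g n = c) → ∀ n, g (n + 1) = g n := by
  intro t
  induction t with
  | zero =>
    rintro g Cb _ ⟨c, hc⟩ n
    simp only [Function.iterate_zero, id] at hc
    rw [hc, hc]
  | succ t ih =>
    rintro g Cb hb ⟨c, hc⟩ n
    set h := dI g with hh
    have hbh : ∀ n, |h n| ≤ 2 * Cb := by
      intro n
      have := abs_sub (g (n+1)) (g n)
      calc |h n| ≤ |g (n+1)| + |g n| := abs_sub _ _
        _ ≤ 2 * Cb := by have := hb (n+1); have := hb n; omega
    have hch : ∃ c, ∀ n, dI^[t] h n = c := by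
      refine ⟨c, fun n => ?_⟩
      have := hc n
      rwa [Function.iterate_succ_apply] at this
    have hstep := ih h (2 * Cb) hbh hch
    -- h is constant
    have hconst : ∀ m : ℤ, h m = h 0 := by
      intro m
      induction m using Int.induction_on with
      | zero => rfl
      | succ i hi => rw [hstep i, hi]
      | pred i hi => rw [← hi, ← hstep (-i - 1)]; norm_num
    -- h 0 = 0
    have hzero : h 0 = 0 := by
      by_contra hne
      have habs : 1 ≤ |h 0| := Int.one_le_abs hne
      have hgrow : ∀ m : ℕ, g m = g 0 + m * h 0 := by
        intro m
        induction m with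
        | zero => simp
        | succ i hi =>
          have : g (i + 1 : ℕ) = g i + h i := by
            push_cast
            simp only [hh, dI]
            ring
          rw [this, hi, hconst (i : ℤ)]
          push_cast
          ring
      have hCb0 : 0 ≤ Cb := le_trans (abs_nonneg _) (hb 0)
      set Nn : ℕ := (2 * Cb + 1).toNat with hNn
      have hNcast : (Nn : ℤ) = 2 * Cb + 1 := Int.toNat_of_nonneg (by omega)
      have h1 := hgrow Nn
      have h2 := hb (Nn : ℤ)
      have h3 := hb 0
      have habs2 : |(Nn : ℤ) * h 0| = (Nn : ℤ) * |h 0| := by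
        rw [abs_mul, abs_of_nonneg (by positivity : (0:ℤ) ≤ (Nn:ℤ))]
      have this2 : (Nn : ℤ) * |h 0| ≤ |g 0 + (Nn : ℤ) * h 0| + |g 0| := by
        have h6 := abs_sub (g 0 + (Nn : ℤ) * h 0) (g 0)
        have h7 : (g 0 + (Nn : ℤ) * h 0) - g 0 = (Nn : ℤ) * h 0 := by ring
        rw [h7, habs2] at h6
        exact h6
      have h5 : (Nn : ℤ) * |h 0| ≥ 2 * Cb + 1 := by
        have hNn0 : (0:ℤ) ≤ (Nn : ℤ) := by positivity
        have := mul_le_mul_of_nonneg_left habs hNn0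
        rw [mul_one] at this
        omega
      rw [h1] at h2
      linarith [h5, h2, h3, this2]
    have : h n = 0 := by rw [hconst n, hzero]
    simp only [hh, dI] at this
    omega

lemma shift_invariant_of_delta {W : G} {f : G → ℤ} {Cb : ℤ} {t : ℕ}
    (hb : ∀ z, |f z| ≤ Cb) (hδ : ∃ c, ∀ z, (dW W)^[t] f z = c) :
    ∀ z, f (z + W) = f z := by
  intro z
  obtain ⟨c, hc⟩ := hδ
  have key := oneD t (fun n => f (z + n • W)) Cb (fun n => hb _)
    ⟨c, fun n => by rw [dI_iter_eq]; exact hc _⟩ 0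
  simpa using key

set_option maxHeartbeats 1000000 in
lemma periodize {d k m : ℕ} (F : Fin k → Finset (Fin d → ℤ))
    (C : Set (Fin d → ℤ))
    (u : Fin m → (Fin d → ℤ)) (hu : ∀ l, u l ∈ stabSetG C)
    (ℓ : (Fin d → ℤ) →ₗ[ℤ] ℤ) (hℓu : ∀ l, ℓ (u l) = 0)
    (W : Fin d → ℤ) (a : ℤ) (ha : ℓ W = a) (hapos : 0 < a)
    (Φ : Fin k → (Fin d → ℤ) → ℤ)
    (hcnt : ∀ i z, cnt (F i) C z = Φ i z)
    (hΦW : ∀ i z, Φ i (z + W) = Φ i z)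
    (Fund : ∀ z, ∃ n : Fin m → ℤ, a • z = (∑ l, n l • u l) + ℓ z • W) :
    ∃ (C' : Set (Fin d → ℤ)) (p : ℤ), 0 < p ∧ (∀ l, u l ∈ stabSetG C') ∧
      (p • W) ∈ stabSetG C' ∧ (∀ i z, cnt (F i) C' z = Φ i z) := by
  classical
  -- the ℓ-spread of the tiles
  obtain ⟨ρ, hρdef⟩ : ∃ ρ : ℤ,
      ρ = (((Finset.univ : Finset (Fin k)).sup fun i => (F i).sup fun f => (ℓ f).natAbs : ℕ) : ℤ) :=
    ⟨_, rfl⟩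
  have hρ : ∀ i : Fin k, ∀ f ∈ F i, |ℓ f| ≤ ρ := by
    intro i f hf
    have h1 : (ℓ f).natAbs ≤ (F i).sup fun f => (ℓ f).natAbs :=
      Finset.le_sup (f := fun f => (ℓ f).natAbs) hf
    have h2 : ((F i).sup fun f => (ℓ f).natAbs) ≤
        (Finset.univ : Finset (Fin k)).sup fun i => (F i).sup fun f => (ℓ f).natAbs :=
      Finset.le_sup (f := fun i => (F i).sup fun f => (ℓ f).natAbs) (Finset.mem_univ i)
    rw [Int.abs_eq_natAbs, hρdef]
    exact_mod_cast le_trans h1 h2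
  have hρ0 : 0 ≤ ρ := by rw [hρdef]; positivity
  obtain ⟨R, hRdef⟩ : ∃ R : ℤ, R = 2 * ρ + a := ⟨_, rfl⟩
  have hR0 : 0 < R := by omega
  obtain ⟨E, hEdef⟩ : ∃ E : ℤ, E = (∑ l, ∑ j, |u l j|) + R * (∑ j, |W j|) := ⟨_, rfl⟩
  -- fundamental domain property
  have hdom : ∀ z : Fin d → ℤ, 0 ≤ ℓ z → ℓ z < R →
      ∃ (x : Fin d → ℤ), (∀ j, |x j| ≤ E) ∧
        (x - z) ∈ Submodule.span ℤ (Set.range u) := by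
    intro z h0 h1
    obtain ⟨n, hn⟩ := Fund z
    set x : Fin d → ℤ := z - ∑ l, ((n l) / a) • u l with hx
    have hterm : ∀ l : Fin m, n l • u l - (a * (n l / a)) • u l = ((n l) % a) • u l := by
      intro l
      rw [← sub_smul]
      congr 1
      have := Int.mul_ediv_add_emod (n l) a
      omega
    refine ⟨x, ?_, ?_⟩
    · intro j
      have hax : a • x = (∑ l, ((n l) % a) • u l) + ℓ z • W := by
        calc a • x = ((∑ l, n l • u l) + ℓ z • W) - ∑ l, (a * (n l / a)) • u l := by
              rw [hx, smul_sub, hn, Finset.smul_sum]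
              congr 1
              apply Finset.sum_congr rfl
              intro l _
              rw [smul_smul]
          _ = (∑ l, (n l • u l - (a * (n l / a)) • u l)) + ℓ z • W := by
              rw [Finset.sum_sub_distrib]
              abel
          _ = (∑ l, ((n l) % a) • u l) + ℓ z • W := by
              rw [Finset.sum_congr rfl (fun l _ => hterm l)]
      have haxj : a * x j = (∑ l, ((n l) % a) * u l j) + ℓ z * W j := by
        have := congrFun hax j
        simpa [Finset.sum_apply] using this
      have hane : a ≠ 0 := hapos.ne'
      have hbound : |a * x j| ≤ a * E := by
        calc |a * x j| = |(∑ l, ((n l) % a) * u l j) + ℓ z * W j| := by rw [haxj]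
          _ ≤ |∑ l, ((n l) % a) * u l j| + |ℓ z * W j| := abs_add_le _ _
          _ ≤ (∑ l, |((n l) % a) * u l j|) + |ℓ z * W j| := by
              have := Finset.abs_sum_le_sum_abs (fun l => ((n l) % a) * u l j) Finset.univ
              omega
          _ ≤ (∑ l, a * |u l j|) + R * |W j| := by
              have hterm2 : ∀ l : Fin m, |((n l) % a) * u l j| ≤ a * |u l j| := by
                intro l
                rw [abs_mul]
                apply mul_le_mul_of_nonneg_right _ (abs_nonneg _)
                have h1' := Int.emod_nonneg (n l) hane
                have h2' := Int.emod_lt_of_pos (n l) hapos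
                rw [abs_of_nonneg (h1' : (0:ℤ) ≤ n l % a)]
                omega
              have hW : |ℓ z * W j| ≤ R * |W j| := by
                rw [abs_mul]
                apply mul_le_mul_of_nonneg_right _ (abs_nonneg _)
                rw [abs_of_nonneg h0]
                omega
              have := Finset.sum_le_sum (fun l (_ : l ∈ Finset.univ) => hterm2 l)
              omega
          _ ≤ a * E := by
              have h1' : ∀ l : Fin m, |u l j| ≤ ∑ j', |u l j'| :=
                fun l => Finset.single_le_sum (f := fun j' => |u l j'|)
                  (fun j' _ => abs_nonneg _) (Finset.mem_univ j)
              have h2' : |W j| ≤ ∑ j', |W j'| :=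
                Finset.single_le_sum (f := fun j' => |W j'|)
                  (fun j' _ => abs_nonneg _) (Finset.mem_univ j)
              have h3' : (∑ l, a * |u l j|) = a * ∑ l, |u l j| := by
                rw [Finset.mul_sum]
              have h4' : (∑ l, |u l j|) ≤ ∑ l, ∑ j', |u l j'| :=
                Finset.sum_le_sum (fun l _ => h1' l)
              have h5' : R * |W j| ≤ R * ∑ j', |W j'| :=
                mul_le_mul_of_nonneg_left h2' (le_of_lt hR0)
              rw [hEdef, h3']
              have h6' : a * (∑ l, |u l j|) ≤ a * (∑ l, ∑ j', |u l j'|) :=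
                mul_le_mul_of_nonneg_left h4' (le_of_lt hapos)
              have hws : (0:ℤ) ≤ ∑ j', |W j'| :=
                Finset.sum_nonneg (fun j' (_ : j' ∈ Finset.univ) => abs_nonneg (W j'))
              have h7' : R * (∑ j', |W j'|) ≤ a * (R * (∑ j', |W j'|)) :=
                le_mul_of_one_le_left (mul_nonneg hR0.le hws) hapos
              linarith [h5', h6', h7']
      have : a * |x j| ≤ a * E := by
        rw [← abs_of_pos hapos, ← abs_mul]
        rw [abs_of_pos hapos]
        exact hbound
      exact le_of_mul_le_mul_left this hapos
    · rw [hx]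
      rw [show (z - ∑ l, ((n l) / a) • u l) - z = -(∑ l, ((n l) / a) • u l) by abel]
      apply neg_mem
      exact Submodule.sum_mem _ (fun l _ =>
        Submodule.smul_mem _ _ (Submodule.subset_span ⟨l, rfl⟩))
  -- pigeonhole on slab states
  have hpigeon : ∃ N1 N2 : ℕ, (N1 : ℤ) < (N2 : ℤ) ∧
      ∀ z : Fin d → ℤ, 0 ≤ ℓ z → ℓ z < R →
        ((z + (N1 : ℤ) • W ∈ C) ↔ (z + (N2 : ℤ) • W ∈ C)) := by
    set X := (Fin d → ↥(Finset.Icc (-E) E)) with hX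
    have hfin : Finite (X → Prop) := by infer_instance
    have key : ∀ (st : ℕ → X → Prop),
        (st = fun (n : ℕ) (v : X) => ((fun j => ((v j).val : ℤ)) + (n : ℤ) • W ∈ C)) →
        ∀ (na nb : ℕ), st na = st nb →
        ∀ z : Fin d → ℤ, 0 ≤ ℓ z → ℓ z < R →
          ((z + (na : ℤ) • W ∈ C) ↔ (z + (nb : ℤ) • W ∈ C)) := by
      intro st hstdef na nb heq z h0 h1
      obtain ⟨x, hxb, hxz⟩ := hdom z h0 h1
      have hxstab : (x - z) ∈ stabSetG C := stab_span hu hxz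
      have hmem : ∀ j, x j ∈ Finset.Icc (-E) E := by
        intro j
        rcases abs_le.mp (hxb j) with ⟨hl, hr⟩
        exact Finset.mem_Icc.mpr ⟨hl, hr⟩
      set vX : X := fun j => ⟨x j, hmem j⟩ with hvX
      have hiff : ∀ nc : ℕ, (z + (nc:ℤ) • W ∈ C) ↔ st nc vX := by
        intro nc
        rw [hstdef]
        have hxval : (fun j => ((vX j).val : ℤ)) = x := rfl
        simp only [hxval]
        have hst := hxstab (z + (nc:ℤ) • W)
        rw [show z + (nc:ℤ) • W + (x - z) = x + (nc:ℤ) • W by abel] at hst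
        exact hst.symm
      have h3 : st na vX = st nb vX := congrFun heq vX
      rw [hiff na, hiff nb, h3]
    set st : ℕ → X → Prop :=
      fun (n : ℕ) (v : X) => ((fun j => ((v j).val : ℤ)) + (n : ℤ) • W ∈ C) with hst
    obtain ⟨n₁, n₂, hne, hsteq⟩ := Finite.exists_ne_map_eq_of_infinite st
    rcases Nat.lt_or_ge n₁ n₂ with h | h
    · exact ⟨n₁, n₂, by exact_mod_cast h, key st hst n₁ n₂ hsteq⟩
    · have h2 : n₂ < n₁ := lt_of_le_of_ne h (Ne.symm hne)
      exact ⟨n₂, n₁, by exact_mod_cast h2, key st hst n₂ n₁ hsteq.symm⟩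
  obtain ⟨N1, N2, hN12, hstateq⟩ := hpigeon
  obtain ⟨p, hpdef⟩ : ∃ p : ℤ, p = (N2 : ℤ) - (N1 : ℤ) := ⟨_, rfl⟩
  have hppos : 0 < p := by omega
  obtain ⟨pa, hpadef⟩ : ∃ pa : ℤ, pa = p * a := ⟨_, rfl⟩
  have hpa : 0 < pa := by rw [hpadef]; exact mul_pos hppos hapos
  obtain ⟨Nb, hNb⟩ : ∃ Nb : ℤ, Nb = (N1 : ℤ) * a := ⟨_, rfl⟩
  have hℓpW : ℓ (p • W) = pa := by rw [map_zsmul, ha, hpadef]; simp [smul_eq_mul]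
  -- band relation
  have band : ∀ z, Nb + pa ≤ ℓ z → ℓ z < Nb + pa + R → ((z - p • W ∈ C) ↔ (z ∈ C)) := by
    intro z hlo hhi
    have hNsum : Nb + pa = (N2 : ℤ) * a := by rw [hNb, hpadef, hpdef]; ring
    have e1 : ℓ (z - (N2:ℤ) • W) = ℓ z - (N2:ℤ) * a := by
      rw [map_sub, map_zsmul, ha]; simp [smul_eq_mul]
    have h0 : 0 ≤ ℓ (z - (N2:ℤ) • W) := by rw [e1]; linarith [hNsum, hlo]
    have h1 : ℓ (z - (N2:ℤ) • W) < R := by rw [e1]; linarith [hNsum, hhi]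
    have hs := hstateq (z - (N2:ℤ) • W) h0 h1
    rw [show z - (N2:ℤ) • W + (N1:ℤ) • W = z - p • W by rw [hpdef]; module,
        show z - (N2:ℤ) • W + (N2:ℤ) • W = z by module] at hs
    exact hs
  -- the periodized set
  set C' : Set (Fin d → ℤ) := {z | z - ((ℓ z - Nb) / pa) • (p • W) ∈ C} with hC'
  -- (i) stability under the u l
  have hstabu : ∀ l, u l ∈ stabSetG C' := by
    intro l x
    simp only [hC', Set.mem_setOf_eq]
    rw [map_add, hℓu l, add_zero]
    rw [show x + u l - ((ℓ x - Nb) / pa) • (p • W) = (x - ((ℓ x - Nb) / pa) • (p • W)) + u l by abel]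
    exact hu l _
  -- (ii) stability under p • W
  have hstabpW : (p • W) ∈ stabSetG C' := by
    intro x
    simp only [hC', Set.mem_setOf_eq]
    rw [map_add, hℓpW]
    rw [show ℓ x + pa - Nb = (ℓ x - Nb) + 1 * pa by ring,
      Int.add_mul_ediv_right _ _ hpa.ne']
    rw [show x + p • W - ((ℓ x - Nb) / pa + 1) • (p • W) = x - ((ℓ x - Nb) / pa) • (p • W) by module]
  -- (iii) agreement on the band
  have hagree : ∀ z, Nb ≤ ℓ z → ℓ z < Nb + pa + R → (z ∈ C' ↔ z ∈ C) := by
    have main : ∀ nn : ℕ, ∀ z, Nb ≤ ℓ z → ℓ z < Nb + pa + R →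
        (ℓ z - Nb) / pa = (nn : ℤ) → (z ∈ C' ↔ z ∈ C) := by
      intro nn
      induction nn with
      | zero =>
        intro z h0 h1 hq0
        simp only [hC', Set.mem_setOf_eq, hq0]
        norm_num
      | succ t ih =>
        intro z h0 h1 hqz
        have hq1 : 1 ≤ (ℓ z - Nb) / pa := by
          rw [hqz]; exact_mod_cast Nat.one_le_iff_ne_zero.mpr (Nat.succ_ne_zero t)
        have hge : Nb + pa ≤ ℓ z := by
          have hdm := Int.mul_ediv_add_emod (ℓ z - Nb) pa
          have hr0 := Int.emod_nonneg (ℓ z - Nb) hpa.ne'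
          have hmul : pa * 1 ≤ pa * ((ℓ z - Nb) / pa) :=
            mul_le_mul_of_nonneg_left hq1 hpa.le
          linarith [hdm, hr0, hmul]
        have hb := band z hge h1
        have hℓz' : ℓ (z - p • W) = ℓ z - pa := by rw [map_sub, hℓpW]
        have hqz' : (ℓ (z - p • W) - Nb) / pa = (t : ℤ) := by
          rw [hℓz', show ℓ z - pa - Nb = (ℓ z - Nb) + (-1) * pa by ring,
            Int.add_mul_ediv_right _ _ hpa.ne', hqz]
          push_cast
          ring
        have hih := ih (z - p • W) (by rw [hℓz']; linarith) (by rw [hℓz']; linarith) hqz'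
        have hzz' : z ∈ C' ↔ (z - p • W) ∈ C' := by
          simp only [hC', Set.mem_setOf_eq, hqz, hqz']
          push_cast
          rw [show z - ((t:ℤ)+1) • (p • W) = (z - p • W) - (t:ℤ) • (p • W) by module]
        exact hzz'.trans (hih.trans hb)
    intro z h0 h1
    have hq0 : 0 ≤ (ℓ z - Nb) / pa := Int.ediv_nonneg (by linarith) hpa.le
    exact main ((ℓ z - Nb) / pa).toNat z h0 h1 (Int.toNat_of_nonneg hq0).symm
  -- Φ is invariant under all multiples of W
  have hΦmul : ∀ i : Fin k, ∀ c : ℤ, ∀ z, Φ i (z + c • W) = Φ i z := by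
    intro i c
    induction c using Int.induction_on with
    | zero => intro z; simp
    | succ n hi =>
      intro z
      rw [show z + ((n:ℤ)+1) • W = (z + (n:ℤ) • W) + W by module, hΦW, hi]
    | pred n hi =>
      intro z
      have := hΦW i (z + (-(n:ℤ)-1) • W)
      rw [show z + (-(n:ℤ)-1) • W + W = z + (-(n:ℤ)) • W by module] at this
      rw [← this, hi]
  -- (iv) the counting identity for C'
  have hcount : ∀ i z, cnt (F i) C' z = Φ i z := by
    intro i z
    obtain ⟨t, htdef⟩ : ∃ t : ℤ, t = (ℓ z - Nb - ρ) / pa := ⟨_, rfl⟩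
    have e1 : cnt (F i) C' (z + (-t) • (p • W)) = cnt (F i) C' z :=
      cnt_shift_zsmul hstabpW _ _ _
    have e2 : Φ i (z + (-t) • (p • W)) = Φ i z := by
      rw [show (-t) • (p • W) = (-t * p) • W by rw [smul_smul]]
      exact hΦmul i _ z
    have eℓ : ℓ (z + (-t) • (p • W)) = ℓ z - pa * t := by
      rw [map_add, map_zsmul, hℓpW]
      rw [smul_eq_mul]
      ring
    have hdm : pa * t + (ℓ z - Nb - ρ) % pa = ℓ z - Nb - ρ := by
      rw [htdef]; exact Int.mul_ediv_add_emod _ _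
    have hr0 := Int.emod_nonneg (ℓ z - Nb - ρ) hpa.ne'
    have hr1 := Int.emod_lt_of_pos (ℓ z - Nb - ρ) hpa
    have hrng1 : Nb + ρ ≤ ℓ (z + (-t) • (p • W)) := by
      rw [eℓ]
      linarith [hdm, hr0]
    have hrng2 : ℓ (z + (-t) • (p • W)) < Nb + ρ + pa := by
      rw [eℓ]
      linarith [hdm, hr1]
    have e3 : cnt (F i) C' (z + (-t) • (p • W)) = cnt (F i) C (z + (-t) • (p • W)) := by
      unfold cnt
      apply Finset.sum_congr rfl
      intro f hf
      have hfρ := hρ i f hf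
      have habs := abs_le.mp hfρ
      have hℓf : ℓ (z + (-t) • (p • W) - f) = ℓ (z + (-t) • (p • W)) - ℓ f := map_sub _ _ _
      have hcond := hagree (z + (-t) • (p • W) - f)
        (by rw [hℓf]; linarith [hrng1, habs.2])
        (by rw [hℓf]; linarith [hrng2, habs.1, hapos])
      exact if_congr hcond rfl rfl
    calc cnt (F i) C' z = cnt (F i) C' (z + (-t) • (p • W)) := e1.symm
      _ = cnt (F i) C (z + (-t) • (p • W)) := e3
      _ = Φ i (z + (-t) • (p • W)) := hcnt i _
      _ = Φ i z := e2
  exact ⟨C', p, hppos, hstabu, hstabpW, hcount⟩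

lemma finidx {d : ℕ} (Q : ℤ) (hQ : 0 < Q) (S : AddSubgroup (Fin d → ℤ))
    (h : ∀ z : Fin d → ℤ, Q • z ∈ S) : S.FiniteIndex := by
  classical
  have hsur : Function.Surjective
      (fun v : (Fin d → ↥(Finset.Icc (0:ℤ) (Q-1))) =>
        QuotientAddGroup.mk (s := S) (fun j => ((v j).val : ℤ))) := by
    intro q
    obtain ⟨x, rfl⟩ := QuotientAddGroup.mk_surjective q
    have hmem : ∀ j, (x j) % Q ∈ Finset.Icc (0:ℤ) (Q-1) := by
      intro j
      have h1 := Int.emod_nonneg (x j) hQ.ne'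
      have h2 := Int.emod_lt_of_pos (x j) hQ
      exact Finset.mem_Icc.mpr ⟨h1, by omega⟩
    refine ⟨fun j => ⟨(x j) % Q, hmem j⟩, ?_⟩
    apply (QuotientAddGroup.eq_iff_sub_mem).mpr
    have : (fun j => (x j) % Q) - x = Q • (fun j => -((x j) / Q)) := by
      funext j
      have := Int.mul_ediv_add_emod (x j) Q
      simp only [Pi.sub_apply, Pi.smul_apply, smul_eq_mul]
      rw [show Q * -((x j) / Q) = -(Q * ((x j) / Q)) by ring]
      omega
    rw [show (fun j => ((⟨(x j) % Q, hmem j⟩ : ↥(Finset.Icc (0:ℤ) (Q-1))).val : ℤ)) - x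
        = Q • (fun j => -((x j) / Q)) from this]
    exact h _
  have hfin : Finite ((Fin d → ℤ) ⧸ S) := Finite.of_surjective _ hsur
  exact ⟨AddSubgroup.index_ne_zero_of_finite⟩

lemma subsing_finidx {G : Type*} [AddCommGroup G] [Subsingleton G] (S : AddSubgroup G) :
    S.FiniteIndex := by
  have : Finite (G ⧸ S) := Quotient.finite _
  exact ⟨AddSubgroup.index_ne_zero_of_finite⟩

lemma finidx_of_le {G : Type*} [AddCommGroup G] {S T : AddSubgroup G}
    (h : S ≤ T) (hS : S.FiniteIndex) : T.FiniteIndex := by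
  refine ⟨fun h0 => hS.index_ne_zero ?_⟩
  have := AddSubgroup.index_dvd_of_le h
  rw [h0] at this
  exact zero_dvd_iff.mp this
section extras
open Module

variable {d : ℕ}

lemma shift_inv_zsmul {G : Type*} [AddCommGroup G] (f : G → ℤ) (W : G)
    (h : ∀ z, f (z + W) = f z) : ∀ (c : ℤ) (z : G), f (z + c • W) = f z := by
  intro c
  induction c using Int.induction_on with
  | zero => intro z; simp
  | succ n hi =>
    intro z
    rw [show z + ((n:ℤ)+1) • W = (z + (n:ℤ) • W) + W by module, h, hi]
  | pred n hi =>
    intro z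
    have h2 := h (z + (-(n:ℤ)-1) • W)
    rw [show z + (-(n:ℤ)-1) • W + W = z + (-(n:ℤ)) • W by module] at h2
    rw [← h2, hi]

lemma indep_smul {m : ℕ} {v : Fin m → (Fin d → ℚ)} (hv : LinearIndependent ℚ v)
    (c : ℚ) (hc : c ≠ 0) : LinearIndependent ℚ (fun l => c • v l) := by
  rw [Fintype.linearIndependent_iff] at hv ⊢
  intro q hq l
  have : ∑ l, (q l * c) • v l = 0 := by
    rw [← hq]
    apply Finset.sum_congr rfl
    intro l' _
    rw [smul_smul]
  have := hv _ this l
  rcases mul_eq_zero.mp this with h | h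
  · exact h
  · exact absurd h hc

lemma span_smul_eq {m : ℕ} (v : Fin m → (Fin d → ℚ)) (c : ℚ) (hc : c ≠ 0) :
    Submodule.span ℚ (Set.range (fun l => c • v l)) = Submodule.span ℚ (Set.range v) := by
  apply le_antisymm
  · rw [Submodule.span_le]
    rintro x ⟨l, rfl⟩
    exact Submodule.smul_mem _ _ (Submodule.subset_span ⟨l, rfl⟩)
  · rw [Submodule.span_le]
    rintro x ⟨l, rfl⟩
    have : v l = c⁻¹ • (c • v l) := by rw [smul_smul, inv_mul_cancel₀ hc, one_smul]
    rw [this]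
    exact Submodule.smul_mem _ _ (Submodule.subset_span ⟨l, rfl⟩)

end extras
open Module in
set_option maxHeartbeats 4000000 in
theorem stmt_13 (d k : ℕ) (F : Fin k → Finset (Fin d → ℤ))
    (A : Set (Fin d → ℤ)) (htile : ∀ i, Tiles (F i) A)
    (r : ℕ) (B : Fin r → Set (Fin d → ℤ))
    (hdisj : ∀ i j : Fin r, i ≠ j → Disjoint (B i) (B j))
    (hunion : (⋃ i, B i) = A)
    (hper : ∀ i, ∃ g : Fin (d - 1) → (Fin d → ℤ),
      IndepT g ∧ ∀ l, g l ∈ stabSetG (B i)) :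
    ∃ A' : Set (Fin d → ℤ), (∀ i, Tiles (F i) A') ∧ (stabSetG A').FiniteIndex := by
  classical
  rcases Nat.eq_zero_or_pos d with hd0 | hdpos
  · subst hd0
    haveI : Subsingleton (Fin 0 → ℤ) := ⟨fun a b => funext fun j => j.elim0⟩
    exact ⟨A, htile, subsing_finidx _⟩
  rcases Nat.eq_zero_or_pos k with hk0 | hkpos
  · subst hk0
    refine ⟨Set.univ, fun i => i.elim0, ?_⟩
    refine finidx_of_le (S := ⊤) (fun v _ => fun x => by simp) ⟨?_⟩
    rw [AddSubgroup.index_top]; exact one_ne_zero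
  have hmd : (d - 1) + 1 = d := Nat.succ_pred_eq_of_pos hdpos
  choose g hgind hgstab using hper
  have hcntA : ∀ i z, cnt (F i) A z = 1 := fun i => (tiles_iff_cnt _ _).mp (htile i)
  rcases Nat.eq_zero_or_pos r with hr0 | hrpos
  · exfalso
    have hAempty : A = ∅ := by
      rw [← hunion]
      subst hr0
      simp
    have h01 := hcntA ⟨0, hkpos⟩ 0
    rw [hAempty, cnt_empty] at h01
    exact absurd h01 (by norm_num)
  obtain ⟨f₀, hf₀⟩ : ∃ f₀, f₀ ∈ F ⟨0, hkpos⟩ := by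
    obtain ⟨p, ⟨hp1, _, _⟩, _⟩ := htile ⟨0, hkpos⟩ 0
    exact ⟨p.1, hp1⟩
  -- ℚ spans
  set Sp : Fin r → Submodule ℚ (Fin d → ℚ) :=
    fun i => Submodule.span ℚ (Set.range (fun l => castQ (g i l))) with hSpdef
  have hindQ : ∀ i, LinearIndependent ℚ (fun l => castQ (g i l)) := fun i => indepQ (hgind i)
  have hSprank : ∀ i, finrank ℚ (Sp i) = d - 1 := by
    intro i
    rw [hSpdef]
    rw [finrank_span_eq_card (hindQ i), Fintype.card_fin]
  -- representatives
  have hmemfil : ∀ i : Fin r, i ∈ Finset.univ.filter (fun j => Sp j = Sp i) := by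
    intro i; simp
  have hmin'eq : ∀ (st tt : Finset (Fin r)) (hs : st.Nonempty) (ht : tt.Nonempty), st = tt →
      st.min' hs = tt.min' ht := by
    rintro st tt hs ht rfl; rfl
  set rep : Fin r → Fin r :=
    fun i => (Finset.univ.filter (fun j => Sp j = Sp i)).min' ⟨i, hmemfil i⟩ with hrepdef
  have hrepSp : ∀ i, Sp (rep i) = Sp i := by
    intro i
    have := Finset.min'_mem (Finset.univ.filter (fun j => Sp j = Sp i)) ⟨i, hmemfil i⟩
    simp only [Finset.mem_filter] at this
    exact this.2
  have hrepeq : ∀ i j, Sp i = Sp j → rep i = rep j := by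
    intro i j h
    have hfil : Finset.univ.filter (fun j' => Sp j' = Sp i)
        = Finset.univ.filter (fun j' => Sp j' = Sp j) := by
      apply Finset.filter_congr
      intro x _
      rw [h]
    exact hmin'eq _ _ _ _ hfil
  have hrep_idem : ∀ i, rep (rep i) = rep i := fun i => hrepeq (rep i) i (hrepSp i)
  -- scaled generators
  have hMc : ∀ (i j : Fin r) (l : Fin (d-1)), ∃ M : ℤ, 0 < M ∧
      (Sp j = Sp i → M • g i l ∈ Submodule.span ℤ (Set.range (g j))) := by
    intro i j l
    by_cases h : Sp j = Sp i
    · have hmem : castQ (g i l) ∈ Submodule.span ℚ (Set.range (fun l' => castQ (g j l'))) := by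
        show castQ (g i l) ∈ Sp j
        rw [h]
        exact Submodule.subset_span ⟨l, rfl⟩
      obtain ⟨M, hM, hmem'⟩ := rat_span_int hmem
      exact ⟨M, hM, fun _ => hmem'⟩
    · exact ⟨1, one_pos, fun h' => absurd h' h⟩
  choose Mc hMcpos hMcmem using hMc
  set Mi : Fin r → ℤ := fun i => ∏ j, ∏ l, Mc i j l with hMidef
  have hMipos : ∀ i, 0 < Mi i := by
    intro i
    apply Finset.prod_pos
    intro j _
    exact Finset.prod_pos (fun l _ => hMcpos i j l)
  set u : Fin r → Fin (d-1) → (Fin d → ℤ) := fun i l => (Mi i) • g i l with hudef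
  have hustab : ∀ i j, Sp j = Sp i → ∀ l, u i l ∈ stabSetG (B j) := by
    intro i j hSpj l
    have hdvd : Mc i j l ∣ Mi i :=
      dvd_trans (Finset.dvd_prod_of_mem (fun l' => Mc i j l') (Finset.mem_univ l))
        (Finset.dvd_prod_of_mem (fun j' => ∏ l', Mc i j' l') (Finset.mem_univ j))
    obtain ⟨c, hc⟩ := hdvd
    have heq : u i l = c • (Mc i j l • g i l) := by
      rw [hudef]
      simp only
      rw [smul_smul, ← mul_comm (Mc i j l) c, ← hc]
    rw [heq]
    exact stab_span (hgstab j) (Submodule.smul_mem _ _ (hMcmem i j l hSpj))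
  have hucast : ∀ i l, castQ (u i l) = ((Mi i : ℚ)) • castQ (g i l) := by
    intro i l; rw [hudef]; exact castQ_zsmul _ _
  have hMiQ : ∀ i, ((Mi i : ℚ)) ≠ 0 := fun i => Int.cast_ne_zero.mpr (hMipos i).ne'
  have hufun : ∀ i, (fun l => castQ (u i l)) = (fun l => ((Mi i : ℚ)) • castQ (g i l)) :=
    fun i => funext (hucast i)
  have huindQ : ∀ i, LinearIndependent ℚ (fun l => castQ (u i l)) := by
    intro i
    rw [hufun i]
    exact indep_smul (hindQ i) _ (hMiQ i)
  have huspan : ∀ i, Submodule.span ℚ (Set.range (fun l => castQ (u i l))) = Sp i := by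
    intro i
    rw [hufun i, span_smul_eq _ _ (hMiQ i), hSpdef]
  -- the merged pieces
  set C : Fin r → Set (Fin d → ℤ) := fun i => ⋃ (j : Fin r) (_ : rep j = i), B j with hCdef
  have hCstab : ∀ i l, u i l ∈ stabSetG (C i) := by
    intro i l
    apply stab_iUnion
    intro j
    apply stab_iUnion
    intro hj
    have hsp : Sp j = Sp i := by rw [← hj]; exact (hrepSp j).symm
    exact hustab i j hsp l
  have hCdisj : ∀ i i', i ≠ i' → Disjoint (C i) (C i') := by
    intro i i' hne
    rw [Set.disjoint_left]
    rintro z hz hz'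
    simp only [hCdef, Set.mem_iUnion] at hz hz'
    obtain ⟨j, hj, hzj⟩ := hz
    obtain ⟨j', hj', hzj'⟩ := hz'
    have hjj' : j ≠ j' := by
      rintro rfl
      exact hne (hj ▸ hj' ▸ rfl)
    exact (hdisj j j' hjj').le_bot ⟨hzj, hzj'⟩
  have hCunion : ⋃ i, C i = A := by
    rw [← hunion]
    apply le_antisymm
    · intro z hz
      simp only [hCdef, Set.mem_iUnion] at hz ⊢
      obtain ⟨i, j, _, hzj⟩ := hz
      exact ⟨j, hzj⟩
    · intro z hz
      simp only [Set.mem_iUnion] at hz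
      obtain ⟨j, hzj⟩ := hz
      simp only [hCdef, Set.mem_iUnion]
      exact ⟨rep j, j, rfl, hzj⟩
  -- counting functions of the pieces
  set Φ : Fin r → Fin k → (Fin d → ℤ) → ℤ := fun i mm z => cnt (F mm) (C i) z with hΦdef
  have hΦsum : ∀ mm z, ∑ i, Φ i mm z = 1 := by
    intro mm z
    rw [← cnt_iUnion C hCdisj (F mm) z, hCunion, hcntA]
  have hΦbound : ∀ i mm z, |Φ i mm z| ≤ ((F mm).card : ℤ) := by
    intro i mm z
    rw [hΦdef, abs_of_nonneg (cnt_nonneg _ _ _)]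
    exact cnt_le_card _ _ _
  have hΦstab : ∀ i mm, ∀ v ∈ stabSetG (C i), ∀ z, Φ i mm (z + v) = Φ i mm z := by
    intro i mm v hv z
    exact cnt_shift hv (F mm) z
  -- per-piece periodization
  have hmain : ∀ i : Fin r, ∃ (C' : Set (Fin d → ℤ)) (qi : ℤ), 0 < qi ∧
      (∀ z, qi • z ∈ stabSetG C') ∧ (∀ mm z, cnt (F mm) C' z = Φ i mm z) := by
    intro i
    by_cases hCe : C i = ∅
    · refine ⟨∅, 1, one_pos, fun z => stab_empty _, fun mm z => ?_⟩
      rw [cnt_empty, hΦdef]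
      simp only
      rw [hCe, cnt_empty]
    · have hirep : rep i = i := by
        obtain ⟨z, hzC⟩ := Set.nonempty_iff_ne_empty.mpr hCe
        simp only [hCdef, Set.mem_iUnion] at hzC
        obtain ⟨j, hj, _⟩ := hzC
        rw [← hj, hrep_idem j]
      obtain ⟨ℓ, W₀, hℓu, hℓW₀, hker⟩ := exists_ell hmd (u i) (huindQ i)
      -- transversal invariance vectors for all other pieces
      have hw : ∀ i' : Fin r, ∃ wv : Fin d → ℤ, ℓ wv ≠ 0 ∧
          (i' ≠ i → ∀ mm z, Φ i' mm (z + wv) = Φ i' mm z) := by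
        intro i'
        by_cases hne : i' = i
        · exact ⟨W₀, hℓW₀, fun h => absurd hne h⟩
        by_cases hCe' : C i' = ∅
        · refine ⟨W₀, hℓW₀, fun _ mm z => ?_⟩
          rw [hΦdef]
          simp only
          rw [hCe', cnt_empty, cnt_empty]
        · have hirep' : rep i' = i' := by
            obtain ⟨z, hzC⟩ := Set.nonempty_iff_ne_empty.mpr hCe'
            simp only [hCdef, Set.mem_iUnion] at hzC
            obtain ⟨j, hj, _⟩ := hzC
            rw [← hj, hrep_idem j]
          have hex : ∃ l₀, ℓ (u i' l₀) ≠ 0 := by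
            by_contra hall
            push_neg at hall
            have hle : Sp i' ≤ Sp i := by
              rw [← huspan i', ← huspan i]
              rw [Submodule.span_le]
              rintro x ⟨l, rfl⟩
              exact hker _ (hall l)
            have heq : Sp i' = Sp i :=
              Submodule.eq_of_le_of_finrank_le hle (by rw [hSprank, hSprank])
            have := hrepeq i' i heq
            rw [hirep', hirep] at this
            exact hne this
          obtain ⟨l₀, hl₀⟩ := hex
          exact ⟨u i' l₀, hl₀, fun _ mm z => hΦstab i' mm _ (hCstab i' l₀) z⟩
      choose w hwℓ hwΦ using hw
      -- a vector W₁ transversal to the piece, fixing all the Φ i mm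
      have hW₁ : ∃ W₁ : Fin d → ℤ, ℓ W₁ ≠ 0 ∧ ∀ mm z, Φ i mm (z + W₁) = Φ i mm z := by
        set T : Finset (Fin r) := Finset.univ.erase i with hTdef
        by_cases hT : T = ∅
        · refine ⟨W₀, hℓW₀, fun mm z => ?_⟩
          have h1 := hΦsum mm z
          have h2 := hΦsum mm (z + W₀)
          rw [← Finset.sum_erase_add _ _ (Finset.mem_univ i), ← hTdef, hT] at h1 h2
          simp only [Finset.sum_empty, zero_add] at h1 h2
          rw [h1, h2]
        · obtain ⟨i₀, hi₀⟩ := Finset.nonempty_of_ne_empty hT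
          set bP : Fin r → ℤ := fun i' => ∏ j ∈ T.erase i', ℓ (w j) with hbPdef
          set P : ℤ := ∏ j ∈ T, ℓ (w j) with hPdef
          have hbP : ∀ i' ∈ T, bP i' * ℓ (w i') = P := fun i' hi' =>
            Finset.prod_erase_mul _ _ hi'
          have hPne : P ≠ 0 := Finset.prod_ne_zero_iff.mpr (fun j _ => hwℓ j)
          set V : Fin r → (Fin d → ℤ) := fun i' => bP i' • w i' with hVdef
          have hℓV : ∀ i' ∈ T, ℓ (V i') = P := by
            intro i' hi'
            rw [hVdef]
            simp only
            rw [map_zsmul, smul_eq_mul]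
            exact hbP i' hi'
          have hMd : ∀ i' : Fin r, ∃ Md : ℤ, 0 < Md ∧
              (i' ∈ T → Md • (V i' - V i₀) ∈ Submodule.span ℤ (Set.range (u i))) := by
            intro i'
            by_cases hi' : i' ∈ T
            · have hℓδ : ℓ (V i' - V i₀) = 0 := by
                rw [map_sub, hℓV i' hi', hℓV i₀ hi₀, sub_self]
              obtain ⟨M, hM, hmem'⟩ := rat_span_int (hker _ hℓδ)
              exact ⟨M, hM, fun _ => hmem'⟩
            · exact ⟨1, one_pos, fun h => absurd h hi'⟩
          choose Md hMdpos hMdmem using hMd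
          set M₀ : ℤ := ∏ i', Md i' with hM₀def
          have hM₀pos : 0 < M₀ := Finset.prod_pos (fun i' _ => hMdpos i')
          set W₁ : Fin d → ℤ := M₀ • V i₀ with hW₁def
          set Wv : Fin r → (Fin d → ℤ) := fun i' => if i' ∈ T then M₀ • V i' else W₁ with hWvdef
          have hWvN : ∀ i', Wv i' - W₁ ∈ (Submodule.span ℤ (Set.range (u i))).toAddSubgroup := by
            intro i'
            rw [Submodule.mem_toAddSubgroup, hWvdef]
            simp only
            by_cases hi' : i' ∈ T
            · rw [if_pos hi']
              rw [show M₀ • V i' - W₁ = M₀ • (V i' - V i₀) by rw [hW₁def, smul_sub]]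
              obtain ⟨cc, hcc⟩ : Md i' ∣ M₀ :=
                Finset.dvd_prod_of_mem (fun i'' => Md i'') (Finset.mem_univ i')
              rw [hcc, mul_comm, mul_smul]
              exact Submodule.smul_mem _ _ (hMdmem i' hi')
            · rw [if_neg hi', sub_self]; exact zero_mem _
          have hℓW₁ : ℓ W₁ ≠ 0 := by
            rw [hW₁def, map_zsmul, smul_eq_mul]
            exact mul_ne_zero hM₀pos.ne' (by rw [hℓV i₀ hi₀]; exact hPne)
          refine ⟨W₁, hℓW₁, fun mm => ?_⟩
          have hnice : ∀ v ∈ (Submodule.span ℤ (Set.range (u i))).toAddSubgroup,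
              ∀ z, Φ i mm (z + v) = Φ i mm z := by
            intro v hv z
            rw [Submodule.mem_toAddSubgroup] at hv
            exact hΦstab i mm v (stab_span (fun l => hCstab i l) hv) z
          have hψ : ∀ i' ∈ T, ∀ z, Φ i' mm (z + Wv i') = Φ i' mm z := by
            intro i' hi' z
            rw [hWvdef]
            simp only
            rw [if_pos hi', hVdef]
            simp only
            rw [smul_smul]
            exact shift_inv_zsmul (Φ i' mm) (w i')
              (hwΦ i' (Finset.ne_of_mem_erase hi') mm) (M₀ * bP i') z
          have hf : ∀ z, Φ i mm z = 1 - ∑ i' ∈ T, Φ i' mm z := by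
            intro z
            have h2 := Finset.sum_erase_add Finset.univ (fun i' => Φ i' mm z) (Finset.mem_univ i)
            rw [hΦsum mm z, ← hTdef] at h2
            linarith [h2]
          obtain ⟨c, hc⟩ := delta_iter W₁ Wv _ hWvN T (Φ i mm) (fun i' => Φ i' mm) 1
            hnice hψ hf
          exact shift_invariant_of_delta (fun z => hΦbound i mm z) ⟨c, hc⟩
      obtain ⟨W₁, hℓW₁, hΦW₁⟩ := hW₁
      -- the Fund property
      set e : Fin d → (Fin d → ℤ) := fun j => fun j' => if j = j' then 1 else 0 with hedef
      set η : (Fin d → ℤ) → (Fin d → ℤ) := fun z => (ℓ W₁) • z - (ℓ z) • W₁ with hηdef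
      have hℓη : ∀ z, ℓ (η z) = 0 := by
        intro z
        rw [hηdef]
        simp only
        rw [map_sub, map_zsmul, map_zsmul, smul_eq_mul, smul_eq_mul, mul_comm]
        ring
      have hMe : ∀ j, ∃ M : ℤ, 0 < M ∧
          M • η (e j) ∈ Submodule.span ℤ (Set.range (u i)) :=
        fun j => rat_span_int (hker _ (hℓη (e j)))
      choose Me hMepos hMemem using hMe
      set M' : ℤ := ∏ j, Me j with hM'def
      have hM'pos : 0 < M' := Finset.prod_pos (fun j _ => hMepos j)
      have hηlin : ∀ z, η z = ∑ j, z j • η (e j) := by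
        intro z
        have hz : z = ∑ j, z j • e j := by rw [hedef]; exact pi_eq_sum_univ z
        have hℓz : ℓ z = ∑ j, z j * ℓ (e j) := by
          conv_lhs => rw [hz]
          rw [map_sum]
          apply Finset.sum_congr rfl
          intro j _
          rw [map_zsmul, smul_eq_mul]
        symm
        calc ∑ j, z j • η (e j)
            = ∑ j, (z j • ((ℓ W₁) • e j) - z j • ((ℓ (e j)) • W₁)) := by
              apply Finset.sum_congr rfl
              intro j _
              rw [hηdef]
              simp only
              rw [smul_sub]
          _ = (ℓ W₁) • (∑ j, z j • e j) - (∑ j, z j * ℓ (e j)) • W₁ := by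
              rw [Finset.sum_sub_distrib, Finset.smul_sum, Finset.sum_smul]
              congr 1
              · apply Finset.sum_congr rfl
                intro j _
                rw [smul_comm]
              · apply Finset.sum_congr rfl
                intro j _
                rw [smul_smul]
          _ = (ℓ W₁) • z - (ℓ z) • W₁ := by rw [← hz, ← hℓz]
          _ = η z := by rw [hηdef]
      have hFundSpan : ∀ z, M' • η z ∈ Submodule.span ℤ (Set.range (u i)) := by
        intro z
        rw [hηlin z, Finset.smul_sum]
        apply Submodule.sum_mem
        intro j _
        rw [smul_comm]
        apply Submodule.smul_mem
        obtain ⟨cc, hcc⟩ : Me j ∣ M' := Finset.dvd_prod_of_mem (fun j' => Me j') (Finset.mem_univ j)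
        rw [hcc, mul_comm, mul_smul]
        exact Submodule.smul_mem _ _ (hMemem j)
      set sg : ℤ := if 0 < ℓ W₁ then 1 else -1 with hsgdef
      set W : Fin d → ℤ := (sg * M') • W₁ with hWdef
      have haeq : ℓ W = sg * M' * ℓ W₁ := by rw [hWdef, map_zsmul, smul_eq_mul]
      have hapos : 0 < ℓ W := by
        rw [haeq, hsgdef]
        by_cases h : 0 < ℓ W₁
        · rw [if_pos h]
          nlinarith [hM'pos]
        · rw [if_neg h]
          have : ℓ W₁ < 0 := lt_of_le_of_ne (not_lt.mp h) hℓW₁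
          nlinarith [hM'pos]
      have hFund : ∀ z, ∃ n : Fin (d-1) → ℤ,
          (ℓ W) • z = (∑ l, n l • u i l) + (ℓ z) • W := by
        intro z
        have hmem : (ℓ W) • z - (ℓ z) • W ∈ Submodule.span ℤ (Set.range (u i)) := by
          have h1 : (ℓ W) • z - (ℓ z) • W = sg • (M' • η z) := by
            rw [haeq, hWdef, hηdef]
            simp only
            module
          rw [h1]
          exact Submodule.smul_mem _ _ (hFundSpan z)
        obtain ⟨n, hn⟩ := (Submodule.mem_span_range_iff_exists_fun ℤ).mp hmem
        refine ⟨n, ?_⟩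
        rw [hn]
        abel
      have hΦWfin : ∀ mm z, Φ i mm (z + W) = Φ i mm z := by
        intro mm z
        rw [hWdef]
        exact shift_inv_zsmul (Φ i mm) W₁ (hΦW₁ mm) (sg * M') z
      obtain ⟨C'', p, hppos, hstabu', hstabpW', hcnt'⟩ :=
        periodize F (C i) (u i) (fun l => hCstab i l) ℓ hℓu W (ℓ W) rfl hapos
          (fun mm => Φ i mm) (fun mm z => rfl) hΦWfin hFund
      refine ⟨C'', p * ℓ W, mul_pos hppos hapos, ?_, fun mm z => hcnt' mm z⟩
      intro z
      obtain ⟨n, hn⟩ := hFund z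
      have hsplit : (p * ℓ W) • z = (∑ l, (p * n l) • u i l) + (ℓ z) • (p • W) := by
        rw [mul_smul, hn, smul_add, Finset.smul_sum]
        congr 1
        · apply Finset.sum_congr rfl
          intro l _
          rw [smul_smul]
        · rw [smul_comm]
      rw [hsplit]
      apply add_mem
      · apply sum_mem
        intro l _
        exact AddSubgroup.zsmul_mem _ (hstabu' l) _
      · exact AddSubgroup.zsmul_mem _ hstabpW' _
  choose C' qi hqpos hqstab hqcnt using hmain
  -- disjointness of the new pieces
  have hdisj' : ∀ i i', i ≠ i' → Disjoint (C' i) (C' i') := by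
    intro i i' hne
    rw [Set.disjoint_left]
    intro z hz hz'
    have h1 : 1 ≤ cnt (F ⟨0, hkpos⟩) (C' i) (f₀ + z) :=
      cnt_pos_of_mem hf₀ (by rw [show f₀ + z - f₀ = z by abel]; exact hz)
    have h2 : 1 ≤ cnt (F ⟨0, hkpos⟩) (C' i') (f₀ + z) :=
      cnt_pos_of_mem hf₀ (by rw [show f₀ + z - f₀ = z by abel]; exact hz')
    have hsum : ∑ i'', cnt (F ⟨0, hkpos⟩) (C' i'') (f₀ + z) = 1 := by
      rw [Finset.sum_congr rfl (fun i'' _ => hqcnt i'' ⟨0, hkpos⟩ (f₀ + z))]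
      exact hΦsum _ _
    have hstep := Finset.sum_le_sum_of_subset_of_nonneg
      (Finset.subset_univ ({i, i'} : Finset (Fin r)))
      (fun x _ _ => cnt_nonneg (F ⟨0, hkpos⟩) (C' x) (f₀ + z))
    rw [Finset.sum_pair hne, hsum] at hstep
    omega
  set A' : Set (Fin d → ℤ) := ⋃ i, C' i with hA'def
  have htile' : ∀ mm, Tiles (F mm) A' := by
    intro mm
    rw [tiles_iff_cnt]
    intro z
    rw [hA'def, cnt_iUnion C' hdisj' (F mm) z,
      Finset.sum_congr rfl (fun i _ => hqcnt i mm z), hΦsum]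
  set Q : ℤ := ∏ i, qi i with hQdef
  have hQpos : 0 < Q := Finset.prod_pos (fun i _ => hqpos i)
  have hQstab : ∀ z, Q • z ∈ stabSetG A' := by
    intro z
    apply stab_iUnion
    intro i
    have hQsplit : Q = qi i * (∏ j ∈ Finset.univ.erase i, qi j) := by
      rw [hQdef, mul_comm]
      exact (Finset.prod_erase_mul _ _ (Finset.mem_univ i)).symm
    rw [hQsplit, mul_smul]
    exact hqstab i _
  exact ⟨A', htile', finidx Q hQpos _ hQstab⟩
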